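/- The smoothed strategy s* is continuous on (a_1,a_2]. -/

import Mathlib

open Set

/-- Strict monotonicity of `t ↦ a * p_w t + p_p t` for `a ∈ (0,1]`. -/
lemma aux_strictMono (p_w p_p p_w' p_p' : ℝ → ℝ)
    (hpw : ∀ t, HasDerivAt p_w (p_w' t) t)
    (hpp : ∀ t, HasDerivAt p_p (p_p' t) t)
    (hpw'_nonneg : ∀ t, 0 ≤ p_w' t) (hpp'_nonneg : ∀ t, 0 ≤ p_p' t)
    (hsum_pos : ∀ t, 0 < p_w' t + p_p' t)
    {a : ℝ} (ha : a ∈ Set.Ioc (0:ℝ) 1) :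
    StrictMono (fun t => a * p_w t + p_p t) := by
  apply strictMono_of_deriv_pos
  intro t
  have hder : HasDerivAt (fun t => a * p_w t + p_p t) (a * p_w' t + p_p' t) t :=
    ((hpw t).const_mul a).add (hpp t)
  rw [hder.deriv]
  have h1 : a * (p_w' t + p_p' t) ≤ a * p_w' t + p_p' t := by
    have : a * p_p' t ≤ p_p' t := by
      nlinarith [hpp'_nonneg t, ha.2]
    nlinarith
  have h2 : 0 < a * (p_w' t + p_p' t) := mul_pos ha.1 (hsum_pos t)
  linarith

/-- Continuity of the inverse map `(a, c) ↦ (g a)⁻¹ c`. -/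
lemma aux_inv_cont (p_w p_p p_w' p_p' : ℝ → ℝ)
    (hpw : ∀ t, HasDerivAt p_w (p_w' t) t)
    (hpp : ∀ t, HasDerivAt p_p (p_p' t) t)
    (hpw'_nonneg : ∀ t, 0 ≤ p_w' t) (hpp'_nonneg : ∀ t, 0 ≤ p_p' t)
    (hsum_pos : ∀ t, 0 < p_w' t + p_p' t)
    (hbij : ∀ a ∈ Set.Ioc (0:ℝ) 1, Function.Bijective (fun t => a * p_w t + p_p t)) :
    ContinuousOn (fun p : ℝ × ℝ => Function.invFun (fun t => p.1 * p_w t + p_p t) p.2)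
      (Set.Ioc 0 1 ×ˢ Set.univ) := by
  set g : ℝ → ℝ → ℝ := fun a t => a * p_w t + p_p t with hg
  set φ : ℝ → ℝ → ℝ := fun a c => Function.invFun (g a) c with hφ
  have hginv : ∀ a ∈ Set.Ioc (0:ℝ) 1, ∀ c, g a (φ a c) = c := by
    intro a ha c
    exact Function.invFun_eq ((hbij a ha).2 c)
  intro p hp
  obtain ⟨a0, c0⟩ := p
  obtain ⟨ha0, -⟩ := hp
  rw [Metric.continuousWithinAt_iff]
  intro ε hε
  set t0 := φ a0 c0 with ht0
  have hmono0 := aux_strictMono p_w p_p p_w' p_p' hpw hpp hpw'_nonneg hpp'_nonneg hsum_pos ha0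
  have hgt0 : g a0 t0 = c0 := hginv a0 ha0 c0
  have hlt1 : g a0 (t0 - ε/2) < c0 := by
    rw [← hgt0]; exact hmono0 (by linarith)
  have hlt2 : c0 < g a0 (t0 + ε/2) := by
    rw [← hgt0]; exact hmono0 (by linarith)
  -- the open set where the inverse stays within ε/2 of t0
  set U : Set (ℝ × ℝ) := {q | g q.1 (t0 - ε/2) < q.2} ∩ {q | q.2 < g q.1 (t0 + ε/2)} with hU
  have hcont1 : Continuous (fun q : ℝ × ℝ => g q.1 (t0 - ε/2)) := by
    simp only [hg]; fun_prop
  have hcont2 : Continuous (fun q : ℝ × ℝ => g q.1 (t0 + ε/2)) := by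
    simp only [hg]; fun_prop
  have hUopen : IsOpen U :=
    (isOpen_lt hcont1 continuous_snd).inter (isOpen_lt continuous_snd hcont2)
  have hmem : (a0, c0) ∈ U := ⟨hlt1, hlt2⟩
  obtain ⟨δ, hδpos, hball⟩ := Metric.isOpen_iff.1 hUopen _ hmem
  refine ⟨δ, hδpos, ?_⟩
  rintro ⟨a, c⟩ ⟨haIoc, -⟩ hdist
  have hacU : (a, c) ∈ U := hball hdist
  have hmonoa := aux_strictMono p_w p_p p_w' p_p' hpw hpp hpw'_nonneg hpp'_nonneg hsum_pos haIoc
  have hgφ : g a (φ a c) = c := hginv a haIoc c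
  have h1 : t0 - ε/2 < φ a c := by
    have := hacU.1
    change g a (t0 - ε/2) < c at this
    rw [← hgφ] at this
    exact hmonoa.lt_iff_lt.1 this
  have h2 : φ a c < t0 + ε/2 := by
    have := hacU.2
    change c < g a (t0 + ε/2) at this
    rw [← hgφ] at this
    exact hmonoa.lt_iff_lt.1 this
  rw [Real.dist_eq, abs_sub_lt_iff]
  exact ⟨by linarith, by linarith⟩

/-- The smoothed strategy `s*` is continuous on `(a₁,a₂]`. -/
theorem smoothed_strategy_continuous
    (a1 a2 b2 : ℝ) (ha : a1 < a2) (hb2 : 0 < b2)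
    (F1 : ℝ → ℝ)
    (hF1_cont : Continuous F1) (hF1_mono : Monotone F1)
    (hF1_range : ∀ x, F1 x ∈ Set.Icc (0:ℝ) 1)
    (hF1_pos : ∀ x ∈ Set.Ioc a1 a2, 0 < F1 x)
    (p_w p_p p_w' p_p' : ℝ → ℝ)
    (hpw : ∀ t, HasDerivAt p_w (p_w' t) t)
    (hpp : ∀ t, HasDerivAt p_p (p_p' t) t)
    (hpw'_nonneg : ∀ t, 0 ≤ p_w' t) (hpp'_nonneg : ∀ t, 0 ≤ p_p' t)
    (hsum_pos : ∀ t, 0 < p_w' t + p_p' t)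
    (hpw0 : p_w 0 = 0) (hpp0 : p_p 0 = 0)
    (hbij : ∀ a ∈ Set.Ioc (0:ℝ) 1, Function.Bijective (fun t => a * p_w t + p_p t))
    (u : ℝ → ℝ)
    (hu_cont : ContinuousOn u (Set.Icc 0 b2))
    (hu_mono : MonotoneOn u (Set.Icc 0 b2))
    (hu_nonneg : ∀ y ∈ Set.Icc (0:ℝ) b2, 0 ≤ u y)
    (hu0 : u 0 = 0)
    (eu : ℝ → ℝ → ℝ)
    (heu : ∀ y ∈ Set.Icc (0:ℝ) b2, ∀ x ∈ Set.Ioc a1 a2,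
      u y = F1 x * y - p_w (eu y x) * F1 x - p_p (eu y x))
    (sStar : ℝ → ℝ)
    (hsStar : ∀ x ∈ Set.Ioc a1 a2,
      sStar x = sSup ((fun y => eu y x) '' Set.Icc (0:ℝ) b2)) :
    ContinuousOn sStar (Set.Ioc a1 a2) := by
  classical
  set g : ℝ → ℝ → ℝ := fun a t => a * p_w t + p_p t with hg
  set φ : ℝ → ℝ → ℝ := fun a c => Function.invFun (g a) c with hφ
  -- F1 maps into (0,1] on Ioc a1 a2
  have hF1mem : ∀ x ∈ Set.Ioc a1 a2, F1 x ∈ Set.Ioc (0:ℝ) 1 :=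
    fun x hx => ⟨hF1_pos x hx, (hF1_range x).2⟩
  -- eu y x = φ (F1 x) (F1 x * y - u y)
  have heuφ : ∀ x ∈ Set.Ioc a1 a2, ∀ y ∈ Set.Icc (0:ℝ) b2,
      eu y x = φ (F1 x) (F1 x * y - u y) := by
    intro x hx y hy
    have h1 := heu y hy x hx
    have h2 : g (F1 x) (eu y x) = F1 x * y - u y := by
      simp only [hg]; ring_nf; ring_nf at h1; linarith
    have hinj := (hbij (F1 x) (hF1mem x hx)).1
    have := Function.leftInverse_invFun hinj (eu y x)
    simp only [hφ, ← h2]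
    exact this.symm
  -- the auxiliary function H
  set H : ℝ → ℝ → ℝ := fun x y => φ (F1 x) (F1 x * y - u y) with hH
  -- continuity of H on Ioc a1 a2 ×ˢ Icc 0 b2
  have hφcont := aux_inv_cont p_w p_p p_w' p_p' hpw hpp hpw'_nonneg hpp'_nonneg hsum_pos hbij
  have hinner : ContinuousOn (fun q : ℝ × ℝ => (F1 q.1, F1 q.1 * q.2 - u q.2))
      (Set.Ioc a1 a2 ×ˢ Set.Icc 0 b2) := by
    apply ContinuousOn.prodMk
    · exact (hF1_cont.comp continuous_fst).continuousOn
    · apply ContinuousOn.sub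
      · exact ((hF1_cont.comp continuous_fst).continuousOn).mul continuous_snd.continuousOn
      · exact hu_cont.comp continuous_snd.continuousOn (fun q hq => hq.2)
  have hHcont : ContinuousOn (fun q : ℝ × ℝ => H q.1 q.2)
      (Set.Ioc a1 a2 ×ˢ Set.Icc 0 b2) := by
    apply hφcont.comp hinner
    rintro ⟨x, y⟩ ⟨hx, -⟩
    exact ⟨hF1mem x hx, trivial⟩
  -- sStar agrees with x ↦ sSup (H x '' Icc 0 b2) on Ioc a1 a2
  have hsStarH : ∀ x ∈ Set.Ioc a1 a2, sStar x = sSup (H x '' Set.Icc (0:ℝ) b2) := by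
    intro x hx
    rw [hsStar x hx]
    congr 1
    apply Set.image_congr
    intro y hy
    exact heuφ x hx y hy
  -- main continuity argument
  intro x0 hx0
  -- compact neighborhood of x0 within Ioc a1 a2
  set x1 : ℝ := (a1 + x0) / 2 with hx1
  have hx1lt : a1 < x1 := by simp only [hx1]; linarith [hx0.1]
  have hx1lt' : x1 < x0 := by simp only [hx1]; linarith [hx0.1]
  set C : Set ℝ := Set.Icc x1 a2 with hC
  have hCsub : C ⊆ Set.Ioc a1 a2 := fun z hz => ⟨lt_of_lt_of_le hx1lt hz.1, hz.2⟩
  have hCcomp : IsCompact C := isCompact_Icc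
  have hKcomp : IsCompact (Set.Icc (0:ℝ) b2) := isCompact_Icc
  have hKne : (Set.Icc (0:ℝ) b2).Nonempty := ⟨0, le_refl 0, hb2.le⟩
  have hCKcomp : IsCompact (C ×ˢ Set.Icc (0:ℝ) b2) := hCcomp.prod hKcomp
  have hHcontCK : ContinuousOn (fun q : ℝ × ℝ => H q.1 q.2) (C ×ˢ Set.Icc (0:ℝ) b2) :=
    hHcont.mono (Set.prod_mono hCsub (le_refl _))
  have hunif : UniformContinuousOn (fun q : ℝ × ℝ => H q.1 q.2) (C ×ˢ Set.Icc (0:ℝ) b2) :=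
    hCKcomp.uniformContinuousOn_of_continuous hHcontCK
  -- boundedness and nonemptiness of images
  have himg : ∀ x ∈ Set.Ioc a1 a2, (H x '' Set.Icc (0:ℝ) b2).Nonempty :=
    fun x _ => hKne.image _
  have hbdd : ∀ x ∈ Set.Ioc a1 a2, BddAbove (H x '' Set.Icc (0:ℝ) b2) := by
    intro x hx
    have : ContinuousOn (H x) (Set.Icc (0:ℝ) b2) := by
      have := hHcont.comp (Continuous.continuousOn (by fun_prop :
        Continuous (fun y : ℝ => ((x : ℝ), y)))) (fun y hy => ⟨hx, hy⟩)
      exact this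
    exact (hKcomp.image_of_continuousOn this).bddAbove
  rw [Metric.continuousWithinAt_iff]
  intro ε hε
  rw [Metric.uniformContinuousOn_iff] at hunif
  obtain ⟨δ, hδpos, hδ⟩ := hunif (ε/2) (by linarith)
  refine ⟨min δ (x0 - x1), lt_min hδpos (by linarith), ?_⟩
  intro x hxIoc hdist
  have hdistδ : dist x x0 < δ := lt_of_lt_of_le hdist (min_le_left _ _)
  have hxC : x ∈ C := by
    constructor
    · have : |x - x0| < x0 - x1 := lt_of_lt_of_le hdist (min_le_right _ _)
      have := abs_lt.1 this
      linarith [this.1]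
    · exact hxIoc.2
  have hx0C : x0 ∈ C := ⟨hx1lt'.le, hx0.2⟩
  -- pointwise bound: ∀ y ∈ Icc 0 b2, dist (H x y) (H x0 y) < ε/2
  have hpt : ∀ y ∈ Set.Icc (0:ℝ) b2, dist (H x y) (H x0 y) < ε / 2 := by
    intro y hy
    apply hδ (x, y) ⟨hxC, hy⟩ (x0, y) ⟨hx0C, hy⟩
    rw [Prod.dist_eq]
    simp only [dist_self]
    rw [max_eq_left dist_nonneg]
    exact hdistδ
  have hbB := hbdd x0 hx0
  have hbA := hbdd x hxIoc
  have h1 : sSup (H x '' Set.Icc (0:ℝ) b2) ≤ sSup (H x0 '' Set.Icc (0:ℝ) b2) + ε / 2 := by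
    apply csSup_le ((himg x hxIoc))
    rintro z ⟨y, hy, rfl⟩
    have hd := abs_lt.1 (by simpa [Real.dist_eq] using hpt y hy)
    have hle : H x y ≤ H x0 y + ε / 2 := by linarith [hd.2]
    exact hle.trans (add_le_add_left (le_csSup hbB ⟨y, hy, rfl⟩) _)
  have h2 : sSup (H x0 '' Set.Icc (0:ℝ) b2) ≤ sSup (H x '' Set.Icc (0:ℝ) b2) + ε / 2 := by
    apply csSup_le ((himg x0 hx0))
    rintro z ⟨y, hy, rfl⟩
    have hd := abs_lt.1 (by simpa [Real.dist_eq] using hpt y hy)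
    have hle : H x0 y ≤ H x y + ε / 2 := by linarith [hd.1]
    exact hle.trans (add_le_add_left (le_csSup hbA ⟨y, hy, rfl⟩) _)
  rw [hsStarH x hxIoc, hsStarH x0 hx0, Real.dist_eq, abs_sub_lt_iff]
  exact ⟨by linarith, by linarith⟩
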